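/- Let n ≥ 1 and let L₁,…,L_K be arbitrary 2^n×2^n complex matrices. Then for any vectors φ_a, φ_b ∈ ℂ^{2^n}, the average over all 4^n n-qubit Pauli operators U satisfies (1/4^n) Σ_U Im Σ_{k=1}^{K} ⟨φ_a, U† L_k U φ_a⟩ · ⟨φ_b, U† L_k† U φ_b⟩ = 0. -/

import Mathlib

open Matrix Complex BigOperators

/-- The four single-qubit Pauli matrices I, X, Y, Z. -/
noncomputable def sigma1q : Fin 4 → Matrix (Fin 2) (Fin 2) ℂ :=
  ![!![1, 0; 0, 1], !![0, 1; 1, 0], !![0, -Complex.I; Complex.I, 0], !![1, 0; 0, -1]]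

/-- The n-qubit Pauli operator `σ_{s 0} ⊗ ⋯ ⊗ σ_{s (n-1)}`, realized as a matrix
indexed by `Fin n → Fin 2` (entrywise Kronecker product). -/
noncomputable def pauli (n : ℕ) (s : Fin n → Fin 4) :
    Matrix (Fin n → Fin 2) (Fin n → Fin 2) ℂ :=
  Matrix.of fun i j => ∏ k, sigma1q (s k) (i k) (j k)

/-- The sesquilinear form `⟨x, A y⟩ = x† A y`. -/
noncomputable def sesq {n : ℕ} (x : (Fin n → Fin 2) → ℂ)
    (A : Matrix (Fin n → Fin 2) (Fin n → Fin 2) ℂ) (y : (Fin n → Fin 2) → ℂ) : ℂ :=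
  star x ⬝ᵥ (A *ᵥ y)

/-- The outer product `|a⟩⟨b| = a b†`. -/
noncomputable def outer {n : ℕ} (a b : (Fin n → Fin 2) → ℂ) :
    Matrix (Fin n → Fin 2) (Fin n → Fin 2) ℂ :=
  Matrix.vecMulVec a (star b)

/- ### Auxiliary machinery -/

/-- Integer (Gaussian) model of the Pauli matrices. -/
def zsig : Fin 4 → Fin 2 → Fin 2 → GaussianInt :=
  ![![![1, 0], ![0, 1]], ![![0, 1], ![1, 0]],
    ![![0, ⟨0, -1⟩], ![⟨0, 1⟩, 0]], ![![1, 0], ![0, -1]]]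

/-- The basic single-qubit 4-point function, over the Gaussian integers. -/
def gz (i x j y p u q v : Fin 2) : GaussianInt :=
  ∑ t : Fin 4, star (zsig t i x) * zsig t j y * star (zsig t p u) * zsig t q v

lemma gzkey : ∀ i x j y p u q v : Fin 2,
    star (gz q y p x j v i u) = gz i x j y p u q v := by decide

lemma zsig_eq : ∀ t i j, sigma1q t i j = (zsig t i j : ℂ) := by
  intro t i j
  fin_cases t <;> fin_cases i <;> fin_cases j <;>
    simp [sigma1q, zsig, GaussianInt.toComplex_def']

/-- The basic single-qubit 4-point function. -/
noncomputable def gfun (i x j y p u q v : Fin 2) : ℂ :=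
  ∑ t : Fin 4, star (sigma1q t i x) * sigma1q t j y * star (sigma1q t p u) * sigma1q t q v

lemma gfun_eq (i x j y p u q v : Fin 2) :
    gfun i x j y p u q v = ((gz i x j y p u q v : GaussianInt) : ℂ) := by
  simp [gfun, gz, map_sum, _root_.map_mul, GaussianInt.toComplex_star, zsig_eq,
    Complex.star_def]

lemma gkey (i x j y p u q v : Fin 2) :
    star (gfun q y p x j v i u) = gfun i x j y p u q v := by
  rw [gfun_eq, gfun_eq, Complex.star_def, ← GaussianInt.toComplex_star, gzkey]

/-- Factorization of the summed n-qubit 4-point function over qubits. -/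
lemma Dfact (n : ℕ) (i x j y p u q v : Fin n → Fin 2) :
    ∑ s : Fin n → Fin 4, star (pauli n s i x) * pauli n s j y *
        star (pauli n s p u) * pauli n s q v
      = ∏ k, gfun (i k) (x k) (j k) (y k) (p k) (u k) (q k) (v k) := by
  have h : ∀ s : Fin n → Fin 4, star (pauli n s i x) * pauli n s j y *
      star (pauli n s p u) * pauli n s q v
      = ∏ k, (star (sigma1q (s k) (i k) (x k)) * sigma1q (s k) (j k) (y k) *
          star (sigma1q (s k) (p k) (u k)) * sigma1q (s k) (q k) (v k)) := by
    intro s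
    simp [pauli, star_prod, Finset.prod_mul_distrib]
  rw [Finset.sum_congr rfl fun s _ => h s]
  rw [show (∏ k, gfun (i k) (x k) (j k) (y k) (p k) (u k) (q k) (v k)) =
    ∏ k, ∑ t : Fin 4, (star (sigma1q t (i k) (x k)) * sigma1q t (j k) (y k) *
          star (sigma1q t (p k) (u k)) * sigma1q t (q k) (v k)) from rfl]
  rw [Fintype.prod_sum]

/-- Index quadruples. -/
abbrev Q4 (n : ℕ) :=
  (Fin n → Fin 2) × (Fin n → Fin 2) × (Fin n → Fin 2) × (Fin n → Fin 2)

/-- Coefficient part: `z = ((x,y,j,i),(u,v,q,p))`. -/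
noncomputable def Cf {n : ℕ} (L : Matrix (Fin n → Fin 2) (Fin n → Fin 2) ℂ)
    (φa φb : (Fin n → Fin 2) → ℂ) : Q4 n × Q4 n → ℂ
  | ⟨⟨x, y, j, i⟩, ⟨u, v, q, p⟩⟩ =>
      star (φa x) * L i j * φa y * star (φb u) * star (L q p) * φb v

/-- Pauli 4-point part. -/
noncomputable def Df {n : ℕ} : Q4 n × Q4 n → ℂ
  | ⟨⟨x, y, j, i⟩, ⟨u, v, q, p⟩⟩ =>
      ∏ k, gfun (i k) (x k) (j k) (y k) (p k) (u k) (q k) (v k)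

/-- Reindexing involution. -/
def pe (n : ℕ) : (Q4 n × Q4 n) ≃ (Q4 n × Q4 n) where
  toFun := fun ⟨⟨x, y, j, i⟩, ⟨u, v, q, p⟩⟩ => ⟨⟨y, x, p, q⟩, ⟨v, u, i, j⟩⟩
  invFun := fun ⟨⟨x, y, j, i⟩, ⟨u, v, q, p⟩⟩ => ⟨⟨y, x, p, q⟩, ⟨v, u, i, j⟩⟩
  left_inv := fun ⟨⟨x, y, j, i⟩, ⟨u, v, q, p⟩⟩ => rfl
  right_inv := fun ⟨⟨x, y, j, i⟩, ⟨u, v, q, p⟩⟩ => rfl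

set_option maxHeartbeats 2000000 in
lemma perL (n : ℕ) (L : Matrix (Fin n → Fin 2) (Fin n → Fin 2) ℂ)
    (φa φb : (Fin n → Fin 2) → ℂ) :
    ∑ s : Fin n → Fin 4, sesq φa ((pauli n s)ᴴ * L * pauli n s) φa *
        sesq φb ((pauli n s)ᴴ * Lᴴ * pauli n s) φb
      = ∑ z : Q4 n × Q4 n, Cf L φa φb z * Df z := by
  have hA : ∀ (M : Matrix (Fin n → Fin 2) (Fin n → Fin 2) ℂ)
      (φ : (Fin n → Fin 2) → ℂ) (s : Fin n → Fin 4),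
      sesq φ ((pauli n s)ᴴ * M * pauli n s) φ
        = ∑ z : Q4 n, star (φ z.1) * (star (pauli n s z.2.2.2 z.1) *
            M z.2.2.2 z.2.2.1 * pauli n s z.2.2.1 z.2.1 * φ z.2.1) := by
    intro M φ s
    simp only [sesq, dotProduct, mulVec, Matrix.mul_apply, Matrix.conjTranspose_apply,
      Finset.sum_mul, Finset.mul_sum, Fintype.sum_prod_type, Pi.star_apply]
  calc ∑ s : Fin n → Fin 4, sesq φa ((pauli n s)ᴴ * L * pauli n s) φa *
        sesq φb ((pauli n s)ᴴ * Lᴴ * pauli n s) φb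
      = ∑ s : Fin n → Fin 4, ∑ z1 : Q4 n, ∑ z2 : Q4 n,
          (star (φa z1.1) * (star (pauli n s z1.2.2.2 z1.1) *
            L z1.2.2.2 z1.2.2.1 * pauli n s z1.2.2.1 z1.2.1 * φa z1.2.1)) *
          (star (φb z2.1) * (star (pauli n s z2.2.2.2 z2.1) *
            Lᴴ z2.2.2.2 z2.2.2.1 * pauli n s z2.2.2.1 z2.2.1 * φb z2.2.1)) := by
        refine Finset.sum_congr rfl fun s _ => ?_
        rw [hA L φa s, hA Lᴴ φb s, Finset.sum_mul_sum]
    _ = ∑ z1 : Q4 n, ∑ z2 : Q4 n, ∑ s : Fin n → Fin 4,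
          (star (φa z1.1) * (star (pauli n s z1.2.2.2 z1.1) *
            L z1.2.2.2 z1.2.2.1 * pauli n s z1.2.2.1 z1.2.1 * φa z1.2.1)) *
          (star (φb z2.1) * (star (pauli n s z2.2.2.2 z2.1) *
            Lᴴ z2.2.2.2 z2.2.2.1 * pauli n s z2.2.2.1 z2.2.1 * φb z2.2.1)) := by
        rw [Finset.sum_comm]
        exact Finset.sum_congr rfl fun z1 _ => Finset.sum_comm
    _ = ∑ z1 : Q4 n, ∑ z2 : Q4 n, Cf L φa φb (z1, z2) * Df (z1, z2) := by
        refine Finset.sum_congr rfl fun z1 _ => Finset.sum_congr rfl fun z2 _ => ?_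
        obtain ⟨x, y, j, i⟩ := z1
        obtain ⟨u, v, q, p⟩ := z2
        have hpt : ∀ s : Fin n → Fin 4,
            (star (φa x) * (star (pauli n s i x) * L i j * pauli n s j y * φa y)) *
            (star (φb u) * (star (pauli n s p u) * Lᴴ p q * pauli n s q v * φb v))
            = (star (φa x) * L i j * φa y * star (φb u) * star (L q p) * φb v) *
              (star (pauli n s i x) * pauli n s j y * star (pauli n s p u) *
                pauli n s q v) := by
          intro s
          simp only [Matrix.conjTranspose_apply]
          ring
        rw [Finset.sum_congr rfl fun s _ => hpt s, ← Finset.mul_sum, Dfact]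
        rfl
    _ = ∑ z : Q4 n × Q4 n, Cf L φa φb z * Df z :=
        (Fintype.sum_prod_type (f := fun z : Q4 n × Q4 n => Cf L φa φb z * Df z)).symm

lemma perL_star (n : ℕ) (L : Matrix (Fin n → Fin 2) (Fin n → Fin 2) ℂ)
    (φa φb : (Fin n → Fin 2) → ℂ) :
    star (∑ z : Q4 n × Q4 n, Cf L φa φb z * Df z)
      = ∑ z : Q4 n × Q4 n, Cf L φa φb z * Df z := by
  rw [star_sum]
  refine Fintype.sum_equiv (pe n) _ _ fun z => ?_
  obtain ⟨⟨x, y, j, i⟩, ⟨u, v, q, p⟩⟩ := z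
  have hD : star (Df (n := n) ((x, y, j, i), (u, v, q, p)))
      = Df (pe n ((x, y, j, i), (u, v, q, p))) := by
    show star (∏ k, gfun (i k) (x k) (j k) (y k) (p k) (u k) (q k) (v k)) = _
    rw [star_prod]
    exact Finset.prod_congr rfl fun k _ => by
      rw [show (gfun (i k) (x k) (j k) (y k) (p k) (u k) (q k) (v k)) =
        star (gfun (q k) (y k) (p k) (x k) (j k) (v k) (i k) (u k)) from (gkey _ _ _ _ _ _ _ _).symm,
        star_star]
      rfl
  rw [star_mul', hD]
  congr 1
  show star (star (φa x) * L i j * φa y * star (φb u) * star (L q p) * φb v)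
    = star (φa y) * L q p * φa x * star (φb v) * star (L i j) * φb u
  simp only [StarMul.star_mul, star_star]
  ring

set_option maxHeartbeats 800000 in
/-- Averaged over all n-qubit Paulis `U`, the stochastic-noise contribution
`Im Σ_k ⟨φ_a, U†L_kU φ_a⟩ ⟨φ_b, U†L_k†U φ_b⟩` vanishes. -/
theorem pauli_average_stochastic_noise_im_eq_zero {n K : ℕ} (hn : 1 ≤ n)
    (L : Fin K → Matrix (Fin n → Fin 2) (Fin n → Fin 2) ℂ)
    (φa φb : (Fin n → Fin 2) → ℂ) :
    (1 / 4 ^ n : ℝ) *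
      ∑ s : Fin n → Fin 4,
        (∑ k, sesq φa ((pauli n s)ᴴ * L k * pauli n s) φa *
          sesq φb ((pauli n s)ᴴ * (L k)ᴴ * pauli n s) φb).im
      = 0 := by
  have hzero : (∑ s : Fin n → Fin 4,
      (∑ k, sesq φa ((pauli n s)ᴴ * L k * pauli n s) φa *
        sesq φb ((pauli n s)ᴴ * (L k)ᴴ * pauli n s) φb).im) = 0 := by
    rw [← Complex.im_sum]
    rw [Finset.sum_comm]
    rw [show (∑ k : Fin K, ∑ s : Fin n → Fin 4,
        sesq φa ((pauli n s)ᴴ * L k * pauli n s) φa *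
          sesq φb ((pauli n s)ᴴ * (L k)ᴴ * pauli n s) φb)
      = ∑ k : Fin K, ∑ z : Q4 n × Q4 n, Cf (L k) φa φb z * Df z from
        Finset.sum_congr rfl fun k _ => perL n (L k) φa φb]
    have : ∀ k : Fin K, (∑ z : Q4 n × Q4 n, Cf (L k) φa φb z * Df z).im = 0 := by
      intro k
      have := perL_star n (L k) φa φb
      rw [Complex.star_def] at this
      exact Complex.conj_eq_iff_im.mp this
    rw [Complex.im_sum]
    simp [this]
  rw [hzero, mul_zero]
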